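/- Let G be a tree, (G,λ) a Δ-periodic temporal graph, P_{s,t} a fastest temporal path from s to t with k edges (k ≥ 1), and P_{t,s} a fastest temporal path from t to s. Then d(P_{s,t}) + d(P_{t,s}) ≥ (k-1)·Δ + 2, where d denotes duration. -/

import Mathlib

/-- Travel delay at a middle vertex: first edge has label `a`, second edge has label `b`. -/
def tdelay (Δ a b : ℤ) : ℤ := if a < b then b - a else b - a + Δ

/-- The set of durations of temporal paths along a fixed path with `k+1` edges whose
`Δ`-periodic labels are `lab 0, ..., lab k`. -/
def durations (Δ : ℤ) {k : ℕ} (lab : Fin (k + 1) → ℤ) : Set ℤ :=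
  {d | ∃ t : Fin (k + 1) → ℤ, StrictMono t ∧ (∀ i, lab i ≤ t i ∧ Δ ∣ t i - lab i) ∧
        d = t (Fin.last k) - t 0 + 1}

lemma tdelay_le {Δ a b x : ℤ} (ha : a ∈ Set.Icc 1 Δ) (hb : b ∈ Set.Icc 1 Δ)
    (hx : 0 < x) (hd : Δ ∣ x - (b - a)) : tdelay Δ a b ≤ x := by
  obtain ⟨ha1, ha2⟩ := ha
  obtain ⟨hb1, hb2⟩ := hb
  obtain ⟨m, hm⟩ := hd
  have hΔ : 1 ≤ Δ := le_trans ha1 ha2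
  unfold tdelay
  split_ifs with h
  · rcases le_or_gt 0 m with hm' | hm'
    · nlinarith
    · have hm1 : m ≤ -1 := by omega
      nlinarith
  · push_neg at h
    rcases le_or_gt 1 m with hm' | hm'
    · nlinarith
    · have hm0 : m ≤ 0 := by omega
      nlinarith

lemma tdelay_pair (Δ a b : ℤ) (hΔ : 1 ≤ Δ) : Δ ≤ tdelay Δ a b + tdelay Δ b a := by
  unfold tdelay
  split_ifs <;> omega

lemma dur_lb (Δ : ℤ) {k : ℕ} (lab : Fin (k + 1) → ℤ)
    (hlab : ∀ i, lab i ∈ Set.Icc 1 Δ) (f : ℕ → ℤ)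
    (hf : ∀ i (h : i < k + 1), f i = lab ⟨i, h⟩) {d : ℤ}
    (hd : d ∈ durations Δ lab) :
    1 + ∑ i ∈ Finset.range k, tdelay Δ (f i) (f (i + 1)) ≤ d := by
  obtain ⟨t, hmono, hcong, rfl⟩ := hd
  set g : ℕ → ℤ := fun i => t ⟨min i k, by omega⟩ with hg
  have hgi : ∀ i (h : i < k + 1), g i = t ⟨i, h⟩ := by
    intro i h
    simp only [hg]
    exact congrArg t (Fin.ext (by simp; omega))
  have htel : ∑ i ∈ Finset.range k, (g (i + 1) - g i) = g k - g 0 := Finset.sum_range_sub g k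
  have hsum : ∑ i ∈ Finset.range k, tdelay Δ (f i) (f (i + 1)) ≤
      ∑ i ∈ Finset.range k, (g (i + 1) - g i) := by
    apply Finset.sum_le_sum
    intro i hi
    have hik : i < k := Finset.mem_range.mp hi
    have h1 : i < k + 1 := by omega
    have h2 : i + 1 < k + 1 := by omega
    rw [hf i h1, hf (i + 1) h2, hgi (i + 1) h2, hgi i h1]
    apply tdelay_le (hlab _) (hlab _)
    · have := hmono (show (⟨i, h1⟩ : Fin (k + 1)) < ⟨i + 1, h2⟩ by
        simp [Fin.lt_def])
      omega
    · have d1 := (hcong ⟨i, h1⟩).2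
      have d2 := (hcong ⟨i + 1, h2⟩).2
      have := dvd_sub d2 d1
      convert this using 1
      · rfl
      · ring
  have hgk : g k = t (Fin.last k) := by
    rw [hgi k (by omega)]
    exact congrArg t (Fin.ext (by simp [Fin.last]))
  have hg0 : g 0 = t 0 := by
    rw [hgi 0 (by omega)]
    exact congrArg t (Fin.ext (by simp))
  linarith

/-- if `P_{s,t}` is the (unique) path with `k+1` edges from `s` to `t` in a tree,
with edge labels `lab` (in order from `s` to `t`), `d₁` is the duration of a fastest temporal
path from `s` to `t` and `d₂` the duration of a fastest temporal path from `t` to `s` (along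
the reversed edge-label sequence), then `d₁ + d₂ ≥ ((k+1)-1)·Δ + 2`. -/
theorem duration_sum_lower_bound (Δ : ℤ) (hΔ : 1 ≤ Δ) (k : ℕ)
    (lab : Fin (k + 1) → ℤ) (hlab : ∀ i, lab i ∈ Set.Icc 1 Δ) (d₁ d₂ : ℤ)
    (h₁ : IsLeast (durations Δ lab) d₁)
    (h₂ : IsLeast (durations Δ (lab ∘ Fin.rev)) d₂) :
    (k : ℤ) * Δ + 2 ≤ d₁ + d₂ := by
  set A : ℕ → ℤ := fun i => lab ⟨min i k, by omega⟩ with hA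
  have hAf : ∀ i (h : i < k + 1), A i = lab ⟨i, h⟩ := by
    intro i h
    simp only [hA]
    exact congrArg lab (Fin.ext (by simp; omega))
  set B : ℕ → ℤ := fun i => A (k - i) with hB
  have hBf : ∀ i (h : i < k + 1), B i = (lab ∘ Fin.rev) ⟨i, h⟩ := by
    intro i h
    simp only [hB]
    rw [hAf (k - i) (by omega)]
    refine congrArg lab (Fin.ext ?_)
    simp only [Fin.val_rev]
    omega
  have L1 := dur_lb Δ lab hlab A hAf h₁.1
  have L2 := dur_lb Δ (lab ∘ Fin.rev) (fun i => hlab _) B hBf h₂.1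
  -- rewrite the reversed sum
  have hrev : ∑ i ∈ Finset.range k, tdelay Δ (B i) (B (i + 1)) =
      ∑ i ∈ Finset.range k, tdelay Δ (A (i + 1)) (A i) := by
    rw [← Finset.sum_range_reflect (fun j => tdelay Δ (A (j + 1)) (A j)) k]
    apply Finset.sum_congr rfl
    intro i hi
    have hik : i < k := Finset.mem_range.mp hi
    simp only [hB]
    congr 1 <;> exact congrArg A (by omega)
  rw [hrev] at L2
  have hpair : (k : ℤ) * Δ ≤
      ∑ i ∈ Finset.range k, tdelay Δ (A i) (A (i + 1)) +
      ∑ i ∈ Finset.range k, tdelay Δ (A (i + 1)) (A i) := by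
    rw [← Finset.sum_add_distrib]
    calc (k : ℤ) * Δ = ∑ _i ∈ Finset.range k, Δ := by
          rw [Finset.sum_const, Finset.card_range]; ring
      _ ≤ _ := Finset.sum_le_sum fun i _ => tdelay_pair Δ _ _ hΔ
  linarith
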